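/- Let (X, Σ) be a measurable space, H a Hilbert space over 𝕜, and let Φ₀ be a map from the bounded measurable functions X → 𝕜 to the bounded linear operators on H which is a unital *-homomorphism (linear, multiplicative, Φ₀(1) = I, Φ₀(f̄) = Φ₀(f)*) and weakly bp-continuous (if f_n → f pointwise with sup_n ‖f_n‖_∞ < ∞ then Φ₀(f_n) → Φ₀(f) in the weak operator topology). Then Φ₀ extends uniquely to a measurable functional calculus Φ on (X, Σ), i.e. there is exactly one map Φ from all measurable functions X → 𝕜 to closed operators in H satisfying (MFC1)–(MFC5) with Φ(f) = Φ₀(f) for every bounded measurable f. -/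

import Mathlib

open scoped Topology

noncomputable section

/-- Composition `S ∘ T` of partially defined linear operators, with domain
`{x ∈ dom T | T x ∈ dom S}`. -/
noncomputable def LinearPMap.compP {R E : Type*} [Ring R] [AddCommGroup E] [Module R E]
    (S T : E →ₗ.[R] E) : E →ₗ.[R] E where
  domain := (S.domain.comap T.toFun).map T.domain.subtype
  toFun := S.toFun.comp <| LinearMap.codRestrict S.domain
      (T.toFun.comp (Submodule.inclusion (Submodule.map_subtype_le _ _)))
      (fun x => by
        obtain ⟨y, hy, hyx⟩ := Submodule.mem_map.mp x.2
        have hxy : Submodule.inclusion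
            (Submodule.map_subtype_le T.domain (S.domain.comap T.toFun)) x = y := by
          apply Subtype.ext
          simpa using hyx.symm
        rw [LinearMap.comp_apply, hxy]
        exact hy)

/-- A measurable functional calculus on a measurable space `X`, with values in
closed partially defined operators on a Hilbert space `H` over `𝕜`. -/
structure MeasFC (X : Type*) [MeasurableSpace X] (𝕜 : Type*) [RCLike 𝕜]
    (H : Type*) [NormedAddCommGroup H] [InnerProductSpace 𝕜 H] [CompleteSpace H] where
  ap : (X → 𝕜) → (H →ₗ.[𝕜] H)
  isClosed : ∀ f : X → 𝕜, Measurable f → (ap f).IsClosed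
  mfc1 : ap (fun _ => 1) = (LinearMap.id : H →ₗ[𝕜] H).toPMap ⊤
  mfc2_add : ∀ f g : X → 𝕜, Measurable f → Measurable g → ap f + ap g ≤ ap (f + g)
  mfc2_smul : ∀ (c : 𝕜) (f : X → 𝕜), Measurable f → c • ap f ≤ ap (fun x => c * f x)
  mfc3_le : ∀ f g : X → 𝕜, Measurable f → Measurable g → (ap f).compP (ap g) ≤ ap (f * g)
  mfc3_dom : ∀ f g : X → 𝕜, Measurable f → Measurable g →
      ((ap f).compP (ap g)).domain = (ap g).domain ⊓ (ap (f * g)).domain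
  mfc4_dom : ∀ f : X → 𝕜, Measurable f → (∃ C, ∀ x, ‖f x‖ ≤ C) → (ap f).domain = ⊤
  mfc4_cont : ∀ f : X → 𝕜, Measurable f → (∃ C, ∀ x, ‖f x‖ ≤ C) →
      Continuous fun x : (ap f).domain => ap f x
  mfc4_star : ∀ f : X → 𝕜, Measurable f → (∃ C, ∀ x, ‖f x‖ ≤ C) →
      (ap f).adjoint = ap (fun x => starRingEnd 𝕜 (f x))
  mfc5 : ∀ (f : ℕ → X → 𝕜) (g : X → 𝕜), (∀ n, Measurable (f n)) → Measurable g →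
      (∃ C, ∀ n x, ‖f n x‖ ≤ C) →
      (∀ x, Filter.Tendsto (fun n => f n x) Filter.atTop (𝓝 (g x))) →
      ∀ (x y : H) (hn : ∀ n, x ∈ (ap (f n)).domain) (hg : x ∈ (ap g).domain),
        Filter.Tendsto (fun n => (inner 𝕜 (ap (f n) ⟨x, hn n⟩) y : 𝕜)) Filter.atTop
          (𝓝 (inner 𝕜 (ap g ⟨x, hg⟩) y))

/-- `B` is a `Φ`-null set: `Φ(𝟏_B) = 0`. -/
def MeasFC.IsNull {X : Type*} [MeasurableSpace X] {𝕜 : Type*} [RCLike 𝕜]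
    {H : Type*} [NormedAddCommGroup H] [InnerProductSpace 𝕜 H] [CompleteSpace H]
    (Φ : MeasFC X 𝕜 H) (B : Set X) : Prop :=
  Φ.ap (B.indicator fun _ => 1) = (0 : H →ₗ[𝕜] H).toPMap ⊤



section MFCExtensionAux
open Filter

set_option linter.unusedSectionVars false
set_option linter.unusedVariables false
set_option maxHeartbeats 1000000
variable {𝕜 : Type*} [RCLike 𝕜] {X : Type*} [MeasurableSpace X]
  {H : Type*} [NormedAddCommGroup H] [InnerProductSpace 𝕜 H] [CompleteSpace H]

local notation "⟪" x ", " y "⟫" => @inner 𝕜 _ _ x y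


lemma sq_le_aux {a b : ℝ} (hb : 0 ≤ b) (h : a^2 ≤ b^2) (ha : 0 ≤ a) : a ≤ b := by nlinarith

/-- indicator -/
def ind (A : Set X) : X → 𝕜 := A.indicator fun _ => 1

/-- `f` cut to `A` -/
def cm (f : X → 𝕜) (A : Set X) : X → 𝕜 := f * ind A

lemma cm_apply (f : X → 𝕜) (A : Set X) (y : X) : cm f A y = f y * ind A y := rfl

lemma ind_mem {A : Set X} {y : X} (h : y ∈ A) : ind (𝕜 := 𝕜) A y = 1 := Set.indicator_of_mem h _
lemma ind_not_mem {A : Set X} {y : X} (h : y ∉ A) : ind (𝕜 := 𝕜) A y = 0 := Set.indicator_of_notMem h _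

lemma cm_apply_mem {f : X → 𝕜} {A : Set X} {y : X} (h : y ∈ A) : cm f A y = f y := by
  rw [cm_apply, ind_mem h, mul_one]
lemma cm_apply_not_mem {f : X → 𝕜} {A : Set X} {y : X} (h : y ∉ A) : cm f A y = 0 := by
  rw [cm_apply, ind_not_mem h, mul_zero]

lemma norm_ind_le (A : Set X) (y : X) : ‖ind (𝕜 := 𝕜) A y‖ ≤ 1 := by
  by_cases h : y ∈ A
  · rw [ind_mem h]; simp
  · rw [ind_not_mem h]; simp

lemma meas_ind {A : Set X} (hA : MeasurableSet A) : Measurable (ind (𝕜 := 𝕜) A) :=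
  measurable_const.indicator hA

lemma meas_cm {f : X → 𝕜} {A : Set X} (hf : Measurable f) (hA : MeasurableSet A) :
    Measurable (cm f A) := hf.mul (meas_ind hA)

def BS (f : X → 𝕜) (n : ℕ) : Set X := {y | ‖f y‖ ≤ (n : ℝ)}

lemma measurableSet_BS {f : X → 𝕜} (hf : Measurable f) (n : ℕ) : MeasurableSet (BS f n) :=
  measurableSet_le hf.norm measurable_const

lemma BS_mono (f : X → 𝕜) {n m : ℕ} (h : n ≤ m) : BS f n ⊆ BS f m := fun y hy =>
  le_trans hy ((Nat.cast_le (α := ℝ)).mpr h)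

lemma BS_eventually (f : X → 𝕜) (y : X) : ∀ᶠ n in atTop, y ∈ BS f n := by
  obtain ⟨n₀, hn₀⟩ := exists_nat_ge ‖f y‖
  exact eventually_atTop.mpr ⟨n₀, fun m hm => le_trans hn₀ ((Nat.cast_le (α := ℝ)).mpr hm)⟩

lemma norm_cm_le (f : X → 𝕜) {A : Set X} {C : ℝ} (hC : 0 ≤ C)
    (hb : ∀ y ∈ A, ‖f y‖ ≤ C) (y : X) : ‖cm f A y‖ ≤ C := by
  by_cases h : y ∈ A
  · rw [cm_apply_mem h]; exact hb y h
  · rw [cm_apply_not_mem h]; simpa using hC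

lemma norm_cm_BS_le (f : X → 𝕜) (n : ℕ) (y : X) : ‖cm f (BS f n) y‖ ≤ (n : ℝ) :=
  norm_cm_le f (by positivity) (fun y hy => hy) y

lemma cm_add_diff (f : X → 𝕜) {A A' : Set X} (h : A ⊆ A') :
    cm f A' = cm f A + cm f (A' \ A) := by
  funext y
  by_cases hy : y ∈ A
  · rw [Pi.add_apply, cm_apply_mem (h hy), cm_apply_mem hy,
      cm_apply_not_mem (fun hc => hc.2 hy), add_zero]
  · by_cases hy' : y ∈ A'
    · rw [Pi.add_apply, cm_apply_mem hy', cm_apply_not_mem hy, cm_apply_mem (show y ∈ A' \ A from ⟨hy', hy⟩), zero_add]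
    · rw [Pi.add_apply, cm_apply_not_mem hy', cm_apply_not_mem hy,
        cm_apply_not_mem (fun hc => hy' hc.1), add_zero]

lemma normsq_cm_add_diff (f : X → 𝕜) {A A' : Set X} (h : A ⊆ A') (y : X) :
    ‖cm f A' y‖^2 = ‖cm f A y‖^2 + ‖cm f (A' \ A) y‖^2 := by
  by_cases hy : y ∈ A
  · rw [cm_apply_mem (h hy), cm_apply_mem hy, cm_apply_not_mem (fun hc => hc.2 hy)]; simp
  · by_cases hy' : y ∈ A'
    · rw [cm_apply_mem hy', cm_apply_not_mem hy, cm_apply_mem (show y ∈ A' \ A from ⟨hy', hy⟩)]; simp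
    · rw [cm_apply_not_mem hy', cm_apply_not_mem hy, cm_apply_not_mem (fun hc => hy' hc.1)]; simp

lemma cm_norm_le_of_subset {f : X → 𝕜} {A B : Set X} (h : B ⊆ A) (y : X) :
    ‖cm f B y‖ ≤ ‖cm f A y‖ := by
  by_cases hy : y ∈ B
  · rw [cm_apply_mem hy, cm_apply_mem (h hy)]
  · rw [cm_apply_not_mem hy]; simp

lemma cm_split (f : X → 𝕜) (A B : Set X) : cm f A = cm f (A ∩ B) + cm f (A \ B) := by
  funext y
  by_cases hy : y ∈ A
  · by_cases hyB : y ∈ B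
    · rw [Pi.add_apply, cm_apply_mem hy, cm_apply_mem (show y ∈ A ∩ B from ⟨hy, hyB⟩),
        cm_apply_not_mem (show y ∉ A \ B from fun hc => hc.2 hyB), add_zero]
    · rw [Pi.add_apply, cm_apply_mem hy, cm_apply_not_mem (show y ∉ A ∩ B from fun hc => hyB hc.2),
        cm_apply_mem (show y ∈ A \ B from ⟨hy, hyB⟩), zero_add]
  · rw [Pi.add_apply, cm_apply_not_mem hy, cm_apply_not_mem (show y ∉ A ∩ B from fun hc => hy hc.1),
      cm_apply_not_mem (show y ∉ A \ B from fun hc => hy hc.1), add_zero]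

lemma cm_add_fun (f g : X → 𝕜) (A : Set X) : cm (f + g) A = cm f A + cm g A := by
  funext y
  simp only [cm, Pi.add_apply, Pi.mul_apply, add_mul]

lemma cm_mul_cm (f g : X → 𝕜) (A B : Set X) : cm f A * cm g B = cm (f * g) (A ∩ B) := by
  funext y
  by_cases hA : y ∈ A
  · by_cases hB : y ∈ B
    · rw [Pi.mul_apply, cm_apply_mem hA, cm_apply_mem hB,
        cm_apply_mem (show y ∈ A ∩ B from ⟨hA, hB⟩)]
      rfl
    · rw [Pi.mul_apply, cm_apply_not_mem hB, cm_apply_not_mem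
        (show y ∉ A ∩ B from fun hc => hB hc.2), mul_zero]
  · rw [Pi.mul_apply, cm_apply_not_mem hA, cm_apply_not_mem
      (show y ∉ A ∩ B from fun hc => hA hc.1), zero_mul]

lemma ind_mul_cm (f : X → 𝕜) (A B : Set X) (h : A ⊆ B) :
    (fun y => ind A y * cm f B y) = cm f A := by
  funext y
  by_cases hA : y ∈ A
  · rw [ind_mem hA, cm_apply_mem (h hA), cm_apply_mem hA, one_mul]
  · rw [ind_not_mem hA, cm_apply_not_mem hA, zero_mul]

/-- bounded -/
def Bdd (f : X → 𝕜) : Prop := ∃ C, ∀ x, ‖f x‖ ≤ C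

structure BPHom (X : Type*) [MeasurableSpace X] (𝕜 : Type*) [RCLike 𝕜]
    (H : Type*) [NormedAddCommGroup H] [InnerProductSpace 𝕜 H] [CompleteSpace H] where
  Φ : (X → 𝕜) → (H →L[𝕜] H)
  hone : Φ (fun _ => 1) = 1
  hadd : ∀ f g : X → 𝕜, Measurable f → Bdd f → Measurable g → Bdd g → Φ (f + g) = Φ f + Φ g
  hsmul : ∀ (c : 𝕜) (f : X → 𝕜), Measurable f → Bdd f → Φ (fun x => c * f x) = c • Φ f
  hmul : ∀ f g : X → 𝕜, Measurable f → Bdd f → Measurable g → Bdd g → Φ (f * g) = Φ f * Φ g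
  hstar : ∀ f : X → 𝕜, Measurable f → Bdd f →
      Φ (fun x => starRingEnd 𝕜 (f x)) = ContinuousLinearMap.adjoint (Φ f)
  hbp : ∀ (f : ℕ → X → 𝕜) (g : X → 𝕜), (∀ n, Measurable (f n)) → Measurable g →
      (∃ C, ∀ n x, ‖f n x‖ ≤ C) →
      (∀ x, Filter.Tendsto (fun n => f n x) Filter.atTop (𝓝 (g x))) →
      ∀ x y : H, Filter.Tendsto (fun n => (inner 𝕜 (Φ (f n) x) y : 𝕜)) Filter.atTop
        (𝓝 (inner 𝕜 (Φ g x) y))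

namespace BPHom
variable (P : BPHom X 𝕜 H)

/-- embed real-valued into 𝕜-valued -/
def ofR (s : X → ℝ) : X → 𝕜 := fun y => ((s y : ℝ) : 𝕜)

lemma meas_ofR {s : X → ℝ} (hs : Measurable s) : Measurable (ofR (𝕜 := 𝕜) s) :=
  RCLike.continuous_ofReal.measurable.comp hs

lemma bdd_ofR {s : X → ℝ} (hs : ∃ C, ∀ y, |s y| ≤ C) : Bdd (ofR (𝕜 := 𝕜) s) := by
  obtain ⟨C, hC⟩ := hs
  exact ⟨C, fun y => by simpa [ofR] using hC y⟩

lemma map_zero : P.Φ 0 = 0 := by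
  have h := P.hsmul 0 (fun _ => 1) measurable_const ⟨1, fun x => by simp⟩
  have e : (fun x : X => (0:𝕜) * (fun _ : X => (1:𝕜)) x) = (0 : X → 𝕜) := by funext x; simp
  rw [e] at h
  simpa using h

lemma hsub (f g : X → 𝕜) (hf : Measurable f) (bf : Bdd f) (hg : Measurable g) (bg : Bdd g) :
    P.Φ (f - g) = P.Φ f - P.Φ g := by
  have h1 : f = (f - g) + g := by ring
  have hfg : Measurable (f - g) := hf.sub hg
  have bfg : Bdd (f - g) := by
    obtain ⟨C, hC⟩ := bf; obtain ⟨D, hD⟩ := bg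
    exact ⟨C + D, fun x => (norm_sub_le _ _).trans (add_le_add (hC x) (hD x))⟩
  have := P.hadd (f - g) g hfg bfg hg bg
  rw [← h1] at this
  rw [this]; abel

/-- positivity: nonneg bounded measurable real functions map to positive operators -/
lemma pos (s : X → ℝ) (hs : Measurable s) (hb : ∃ C, ∀ y, s y ≤ C) (h0 : ∀ y, 0 ≤ s y)
    (x : H) : 0 ≤ RCLike.re ⟪P.Φ (ofR s) x, x⟫ := by
  set q : X → 𝕜 := ofR (fun y => Real.sqrt (s y)) with hq
  have hqm : Measurable q := meas_ofR (hs.sqrt)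
  have hqb : Bdd q := by
    obtain ⟨C, hC⟩ := hb
    exact ⟨Real.sqrt C, fun y => by
      simp only [q, ofR, RCLike.norm_ofReal, abs_of_nonneg (Real.sqrt_nonneg _)]
      exact Real.sqrt_le_sqrt (hC y)⟩
  have hqq : (fun y => starRingEnd 𝕜 (q y)) * q = ofR s := by
    funext y
    simp only [q, ofR, Pi.mul_apply, RCLike.conj_ofReal, ← RCLike.ofReal_mul,
      Real.mul_self_sqrt (h0 y)]
  have hstarq : Measurable fun y => starRingEnd 𝕜 (q y) := (RCLike.continuous_conj.measurable).comp hqm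
  have hstarb : Bdd fun y => starRingEnd 𝕜 (q y) := by
    obtain ⟨C, hC⟩ := hqb; exact ⟨C, fun y => by simpa using hC y⟩
  have key : P.Φ (ofR s) = ContinuousLinearMap.adjoint (P.Φ q) * P.Φ q := by
    rw [← hqq, P.hmul _ _ hstarq hstarb hqm hqb, P.hstar _ hqm hqb]
  rw [key]
  have : ⟪(ContinuousLinearMap.adjoint (P.Φ q) * P.Φ q) x, x⟫ = ⟪P.Φ q x, P.Φ q x⟫ := by
    rw [ContinuousLinearMap.mul_apply, ContinuousLinearMap.adjoint_inner_left]
  rw [this, inner_self_eq_norm_sq]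
  positivity


/-- monotonicity -/
lemma mono (s t : X → ℝ) (hs : Measurable s) (hbs : ∃ C, ∀ y, |s y| ≤ C)
    (ht : Measurable t) (hbt : ∃ C, ∀ y, |t y| ≤ C) (hst : ∀ y, s y ≤ t y) (x : H) :
    RCLike.re ⟪P.Φ (ofR s) x, x⟫ ≤ RCLike.re ⟪P.Φ (ofR t) x, x⟫ := by
  have h1 : ofR (𝕜 := 𝕜) t = ofR s + ofR (fun y => t y - s y) := by
    funext y; simp [ofR, ← RCLike.ofReal_add]
  have hd : Measurable (fun y => t y - s y) := ht.sub hs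
  have hbd : ∃ C, ∀ y, t y - s y ≤ C := by
    obtain ⟨C, hC⟩ := hbt; obtain ⟨D, hD⟩ := hbs
    exact ⟨C + D, fun y => by have := (abs_le.mp (hC y)).2; have := (abs_le.mp (hD y)).1; linarith [(abs_le.mp (hC y)).2, (abs_le.mp (hD y)).1]⟩
  have h2 := P.hadd (ofR s) (ofR (fun y => t y - s y)) (meas_ofR hs) (bdd_ofR hbs)
    (meas_ofR hd) (bdd_ofR (by
      obtain ⟨C, hC⟩ := hbt; obtain ⟨D, hD⟩ := hbs
      exact ⟨C + D, fun y => (abs_sub (t y) (s y)).trans (add_le_add (hC y) (hD y))⟩))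
  rw [h1, h2]
  simp only [ContinuousLinearMap.add_apply, inner_add_left, map_add]
  have := P.pos (fun y => t y - s y) hd hbd (fun y => sub_nonneg.mpr (hst y)) x
  linarith

/-- norm-squared identity -/
lemma norm_sq (g : X → 𝕜) (hg : Measurable g) (bg : Bdd g) (x : H) :
    ‖P.Φ g x‖ ^ 2 = RCLike.re ⟪P.Φ (ofR fun y => ‖g y‖ ^ 2) x, x⟫ := by
  have hgg : (fun y => starRingEnd 𝕜 (g y)) * g = ofR fun y => ‖g y‖ ^ 2 := by
    funext y
    simp only [Pi.mul_apply, ofR, RCLike.conj_mul]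
    push_cast
    ring
  have hstarg : Measurable fun y => starRingEnd 𝕜 (g y) := (RCLike.continuous_conj.measurable).comp hg
  have hstarb : Bdd fun y => starRingEnd 𝕜 (g y) := by
    obtain ⟨C, hC⟩ := bg; exact ⟨C, fun y => by simpa using hC y⟩
  rw [← hgg, P.hmul _ _ hstarg hstarb hg bg, P.hstar _ hg bg]
  have : ⟪(ContinuousLinearMap.adjoint (P.Φ g) * P.Φ g) x, x⟫ = ⟪P.Φ g x, P.Φ g x⟫ := by
    rw [ContinuousLinearMap.mul_apply, ContinuousLinearMap.adjoint_inner_left]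
  rw [this, inner_self_eq_norm_sq]

/-- contraction property -/
lemma norm_le (f : X → 𝕜) (hf : Measurable f) {C : ℝ} (hC : 0 ≤ C) (hb : ∀ y, ‖f y‖ ≤ C)
    (x : H) : ‖P.Φ f x‖ ≤ C * ‖x‖ := by
  have bf : Bdd f := ⟨C, hb⟩
  have h1 := P.norm_sq f hf bf x
  have h2 : RCLike.re ⟪P.Φ (ofR fun y => ‖f y‖^2) x, x⟫
      ≤ RCLike.re ⟪P.Φ (ofR fun _ : X => C^2) x, x⟫ := by
    refine P.mono _ _ ((measurable_norm.comp hf).pow_const 2) ?_ measurable_const ?_ ?_ x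
    · exact ⟨C^2, fun y => by
        rw [abs_of_nonneg (by positivity)]
        exact pow_le_pow_left₀ (norm_nonneg _) (hb y) 2⟩
    · exact ⟨C^2, fun y => le_of_eq (abs_of_nonneg (by positivity))⟩
    · exact fun y => pow_le_pow_left₀ (norm_nonneg _) (hb y) 2
  have h3 : P.Φ (ofR fun _ : X => C^2) = ((C^2 : ℝ) : 𝕜) • 1 := by
    have e : ofR (𝕜 := 𝕜) (fun _ : X => C^2)
        = fun y : X => ((C^2 : ℝ) : 𝕜) * (fun _ : X => (1:𝕜)) y := by
      funext y; simp [ofR]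
    rw [e, P.hsmul _ _ measurable_const ⟨1, fun y => by simp⟩, P.hone]
  have h4 : RCLike.re ⟪P.Φ (ofR fun _ : X => C^2) x, x⟫ = C^2 * ‖x‖^2 := by
    rw [h3]
    simp only [ContinuousLinearMap.smul_apply, ContinuousLinearMap.one_apply, inner_smul_left,
      RCLike.conj_ofReal]
    rw [inner_self_eq_norm_sq_to_K]
    rw [← RCLike.ofReal_pow, ← RCLike.ofReal_mul, RCLike.ofReal_re]
  have : ‖P.Φ f x‖^2 ≤ (C * ‖x‖)^2 := by
    rw [h1, mul_pow]; rw [h4] at h2; exact h2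
  exact sq_le_aux (by positivity) this (norm_nonneg _)

/-- pointwise norm comparison -/
lemma norm_apply_mono (g h : X → 𝕜) (mg : Measurable g) (mh : Measurable h) (bh : Bdd h)
    (hle : ∀ y, ‖g y‖ ≤ ‖h y‖) (x : H) : ‖P.Φ g x‖ ≤ ‖P.Φ h x‖ := by
  obtain ⟨C, hC⟩ := bh
  have hC0 : 0 ≤ max C 0 := le_max_right _ _
  have hCh : ∀ y, ‖h y‖ ≤ max C 0 := fun y => le_trans (hC y) (le_max_left _ _)
  have bg : Bdd g := ⟨max C 0, fun y => (hle y).trans (hCh y)⟩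
  have h1 := P.norm_sq g mg bg x
  have h2 := P.norm_sq h mh ⟨C, hC⟩ x
  have h3 : RCLike.re ⟪P.Φ (ofR fun y => ‖g y‖^2) x, x⟫
      ≤ RCLike.re ⟪P.Φ (ofR fun y => ‖h y‖^2) x, x⟫ := by
    refine P.mono _ _ ((measurable_norm.comp mg).pow_const 2) ?_
      ((measurable_norm.comp mh).pow_const 2) ?_ ?_ x
    · exact ⟨(max C 0)^2, fun y => by
        rw [abs_of_nonneg (by positivity)]
        exact pow_le_pow_left₀ (norm_nonneg _) ((hle y).trans (hCh y)) 2⟩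
    · exact ⟨(max C 0)^2, fun y => by
        rw [abs_of_nonneg (by positivity)]
        exact pow_le_pow_left₀ (norm_nonneg _) (hCh y) 2⟩
    · exact fun y => pow_le_pow_left₀ (norm_nonneg _) (hle y) 2
  exact sq_le_aux (norm_nonneg _) (by rw [h1, h2] at *; linarith) (norm_nonneg _)

/-- strong bp-continuity -/
lemma sbp (f : ℕ → X → 𝕜) (g : X → 𝕜) (hf : ∀ n, Measurable (f n)) (hg : Measurable g)
    {C : ℝ} (hC : ∀ n y, ‖f n y‖ ≤ C)
    (hlim : ∀ y, Tendsto (fun n => f n y) atTop (𝓝 (g y))) (x : H) :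
    Tendsto (fun n => P.Φ (f n) x) atTop (𝓝 (P.Φ g x)) := by
  set C' := max C 0 with hC'
  have hC'0 : 0 ≤ C' := le_max_right _ _
  have hfC : ∀ n y, ‖f n y‖ ≤ C' := fun n y => (hC n y).trans (le_max_left _ _)
  have hgC : ∀ y, ‖g y‖ ≤ C' := fun y =>
    le_of_tendsto ((continuous_norm.tendsto _).comp (hlim y)) (Eventually.of_forall fun n => hfC n y)
  have hd : ∀ n, Measurable (f n - g) := fun n => (hf n).sub hg
  have hdb : ∀ n y, ‖(f n - g) y‖ ≤ 2 * C' := fun n y => by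
    calc ‖f n y - g y‖ ≤ ‖f n y‖ + ‖g y‖ := norm_sub_le _ _
    _ ≤ C' + C' := add_le_add (hfC n y) (hgC y)
    _ = 2 * C' := by ring
  have hsub' : ∀ n, P.Φ (f n) x - P.Φ g x = P.Φ (f n - g) x := by
    intro n
    rw [P.hsub (f n) g (hf n) ⟨C', hfC n⟩ hg ⟨C', hgC⟩]
    simp
  -- squares tend to zero
  have hsq : Tendsto (fun n => ‖P.Φ (f n - g) x‖^2) atTop (𝓝 0) := by
    have hkey : ∀ n, ‖P.Φ (f n - g) x‖^2
        = RCLike.re ⟪P.Φ (ofR fun y => ‖(f n - g) y‖^2) x, x⟫ := fun n =>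
      P.norm_sq _ (hd n) ⟨2 * C', hdb n⟩ x
    have hbp' := P.hbp (fun n => ofR fun y => ‖(f n - g) y‖^2) 0
      (fun n => meas_ofR ((measurable_norm.comp (hd n)).pow_const 2))
      measurable_const
      ⟨(2*C')^2, fun n y => by
        simp only [ofR, RCLike.norm_ofReal]
        rw [abs_of_nonneg (by positivity)]
        exact pow_le_pow_left₀ (norm_nonneg _) (hdb n y) 2⟩
      (fun y => by
        have : Tendsto (fun n => (f n - g) y) atTop (𝓝 0) := by
          have := (hlim y).sub_const (g y)
          simpa using this
        have hnrm : Tendsto (fun n => ‖(f n - g) y‖^2) atTop (𝓝 0) := by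
          have h1 : Tendsto (fun n => ‖(f n - g) y‖) atTop (𝓝 0) :=
            by simpa [Function.comp_def] using (continuous_norm.tendsto _).comp this
          simpa using h1.pow 2
        have h2 := ((RCLike.continuous_ofReal (K := 𝕜)).tendsto (0:ℝ)).comp hnrm
        rw [RCLike.ofReal_zero] at h2
        exact h2)
      x x
    rw [P.map_zero] at hbp'
    simp only [ContinuousLinearMap.zero_apply, inner_zero_left] at hbp'
    have h5 := ((RCLike.continuous_re (K := 𝕜)).tendsto 0).comp hbp'
    rw [_root_.map_zero] at h5
    exact h5.congr fun n => (hkey n).symm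
  have hnorm : Tendsto (fun n => ‖P.Φ (f n) x - P.Φ g x‖) atTop (𝓝 0) := by
    have h1 := (Real.continuous_sqrt.tendsto 0).comp hsq
    rw [Real.sqrt_zero] at h1
    have h1' : Tendsto (fun n => ‖P.Φ (f n - g) x‖) atTop (𝓝 0) :=
      h1.congr fun n => Real.sqrt_sq (norm_nonneg _)
    exact h1'.congr fun n => by rw [hsub' n]
  exact tendsto_iff_norm_sub_tendsto_zero.mpr hnorm

lemma bdd_sq_ofR {f : X → 𝕜} {C : ℝ} (hC : ∀ y, ‖f y‖ ≤ C) :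
    ∃ D, ∀ y, |‖f y‖^2| ≤ D :=
  ⟨(max C 0)^2, fun y => by
    rw [abs_of_nonneg (by positivity)]
    exact pow_le_pow_left₀ (norm_nonneg _) ((hC y).trans (le_max_left _ _)) 2⟩

/-- key identity: norm² of difference of consecutive cutoffs -/
lemma normsq_diff (f : X → 𝕜) (hf : Measurable f) {n m : ℕ} (hnm : n ≤ m) (x : H) :
    ‖P.Φ (cm f (BS f m)) x - P.Φ (cm f (BS f n)) x‖^2
      = ‖P.Φ (cm f (BS f m)) x‖^2 - ‖P.Φ (cm f (BS f n)) x‖^2 := by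
  have hsub : BS f n ⊆ BS f m := BS_mono f hnm
  set A := BS f n with hA
  set A' := BS f m with hA'
  have mA : MeasurableSet A := measurableSet_BS hf n
  have mA' : MeasurableSet A' := measurableSet_BS hf m
  have mD : MeasurableSet (A' \ A) := mA'.diff mA
  have m1 : Measurable (cm f A) := meas_cm hf mA
  have m2 : Measurable (cm f A') := meas_cm hf mA'
  have m3 : Measurable (cm f (A' \ A)) := meas_cm hf mD
  have b1 : Bdd (cm f A) := ⟨n, norm_cm_BS_le f n⟩
  have b2 : Bdd (cm f A') := ⟨m, norm_cm_BS_le f m⟩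
  have b3 : Bdd (cm f (A' \ A)) := ⟨m, norm_cm_le f (by positivity) (fun y hy => hy.1)⟩
  have hΦ : P.Φ (cm f A') = P.Φ (cm f A) + P.Φ (cm f (A' \ A)) := by
    rw [cm_add_diff f hsub]; exact P.hadd _ _ m1 b1 m3 b3
  have hL : P.Φ (cm f A') x - P.Φ (cm f A) x = P.Φ (cm f (A' \ A)) x := by
    rw [hΦ]; simp
  rw [hL]
  have k1 := P.norm_sq _ m1 b1 x
  have k2 := P.norm_sq _ m2 b2 x
  have k3 := P.norm_sq _ m3 b3 x
  have hofR : ofR (𝕜 := 𝕜) (fun y => ‖cm f A' y‖^2)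
      = ofR (fun y => ‖cm f A y‖^2) + ofR (fun y => ‖cm f (A' \ A) y‖^2) := by
    funext y
    simp only [ofR, Pi.add_apply, ← RCLike.ofReal_add, normsq_cm_add_diff f hsub y]
  have hΦ2 : P.Φ (ofR (𝕜 := 𝕜) fun y => ‖cm f A' y‖^2)
      = P.Φ (ofR fun y => ‖cm f A y‖^2) + P.Φ (ofR fun y => ‖cm f (A' \ A) y‖^2) := by
    rw [hofR]
    exact P.hadd _ _ (meas_ofR ((measurable_norm.comp m1).pow_const 2))
      (bdd_ofR (bdd_sq_ofR b1.choose_spec))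
      (meas_ofR ((measurable_norm.comp m3).pow_const 2))
      (bdd_ofR (bdd_sq_ofR b3.choose_spec))
  rw [k1, k2, k3, hΦ2]
  simp only [ContinuousLinearMap.add_apply, inner_add_left, map_add]
  ring

lemma S_mono (f : X → 𝕜) (hf : Measurable f) {n m : ℕ} (hnm : n ≤ m) (x : H) :
    ‖P.Φ (cm f (BS f n)) x‖ ≤ ‖P.Φ (cm f (BS f m)) x‖ := by
  have := P.normsq_diff f hf hnm x
  nlinarith [sq_nonneg ‖P.Φ (cm f (BS f m)) x - P.Φ (cm f (BS f n)) x‖,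
    norm_nonneg (P.Φ (cm f (BS f n)) x), norm_nonneg (P.Φ (cm f (BS f m)) x)]

/-- Cauchy criterion from boundedness -/
lemma cauchy_of_norm_bdd (f : X → 𝕜) (hf : Measurable f) (x : H) {M : ℝ}
    (hM : ∀ k, ‖P.Φ (cm f (BS f k)) x‖ ≤ M) :
    CauchySeq fun k => P.Φ (cm f (BS f k)) x := by
  set s := fun k => P.Φ (cm f (BS f k)) x with hs
  set T := fun k => ‖s k‖^2 with hT
  have Tmono : Monotone T := fun a b hab =>
    pow_le_pow_left₀ (norm_nonneg _) (P.S_mono f hf hab x) 2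
  have Tbdd : BddAbove (Set.range T) := by
    refine ⟨(max M 0)^2, ?_⟩
    rintro _ ⟨k, rfl⟩
    exact pow_le_pow_left₀ (norm_nonneg _) ((hM k).trans (le_max_left _ _)) 2
  have Ttend : Tendsto T atTop (𝓝 (⨆ k, T k)) := tendsto_atTop_ciSup Tmono Tbdd
  rw [Metric.cauchySeq_iff']
  intro ε hε
  have hev : ∀ᶠ k in atTop, (⨆ k, T k) - ε^2 < T k :=
    Ttend.eventually (eventually_gt_nhds (by nlinarith))
  obtain ⟨N, hN⟩ := hev.exists
  refine ⟨N, fun n hn => ?_⟩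
  have h1 : ‖s n - s N‖^2 = T n - T N := P.normsq_diff f hf hn x
  have h2 : T n ≤ ⨆ k, T k := le_ciSup Tbdd n
  rw [dist_eq_norm]
  nlinarith [norm_nonneg (s n - s N)]

lemma exists_bound_of_cauchySeq (u : ℕ → H) (h : CauchySeq u) : ∃ M, ∀ k, ‖u k‖ ≤ M := by
  obtain ⟨R, hR0, hR⟩ := cauchySeq_bdd h
  refine ⟨‖u 0‖ + R, fun k => ?_⟩
  have h2 : u k = u 0 + (u k - u 0) := by abel
  rw [h2]
  refine (norm_add_le _ _).trans ?_
  have := hR k 0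
  rw [dist_eq_norm] at this
  linarith

/-- The domain of the extended operator. -/
def Dom (f : X → 𝕜) : Submodule 𝕜 H where
  carrier := {x | CauchySeq fun k => P.Φ (cm f (BS f k)) x}
  add_mem' := by
    intro a b ha hb
    have he : (fun k => P.Φ (cm f (BS f k)) (a + b))
        = fun k => P.Φ (cm f (BS f k)) a + P.Φ (cm f (BS f k)) b := by
      funext k; simp
    show CauchySeq fun k => P.Φ (cm f (BS f k)) (a + b)
    rw [he]
    exact ha.add hb
  zero_mem' := by
    show CauchySeq fun k => P.Φ (cm f (BS f k)) 0
    have he : (fun k => P.Φ (cm f (BS f k)) (0 : H)) = fun _ => (0 : H) := by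
      funext k; simp
    rw [he]
    exact cauchySeq_const 0
  smul_mem' := by
    intro c a ha
    obtain ⟨l, hl⟩ := cauchySeq_tendsto_of_complete ha
    have h2 : Tendsto (fun k => P.Φ (cm f (BS f k)) (c • a)) atTop (𝓝 (c • l)) := by
      have := hl.const_smul c
      have he : (fun k => c • P.Φ (cm f (BS f k)) a)
          = fun k => P.Φ (cm f (BS f k)) (c • a) := by funext k; simp
      rwa [he] at this
    exact h2.cauchySeq

lemma mem_Dom_iff {f : X → 𝕜} {x : H} :
    x ∈ P.Dom f ↔ CauchySeq fun k => P.Φ (cm f (BS f k)) x := Iff.rfl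

open Classical in
def apAux (f : X → 𝕜) (x : H) : H :=
  if h : CauchySeq fun k => P.Φ (cm f (BS f k)) x then (cauchySeq_tendsto_of_complete h).choose
  else 0

lemma tendsto_apAux {f : X → 𝕜} {x : H} (h : x ∈ P.Dom f) :
    Tendsto (fun k => P.Φ (cm f (BS f k)) x) atTop (𝓝 (P.apAux f x)) := by
  have h' : CauchySeq fun k => P.Φ (cm f (BS f k)) x := h
  rw [apAux, dif_pos h']
  exact (cauchySeq_tendsto_of_complete h').choose_spec

/-- the extension as a linear map on its domain -/
def apL (f : X → 𝕜) : (P.Dom f) →ₗ[𝕜] H where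
  toFun := fun x => P.apAux f x.1
  map_add' := by
    intro a b
    refine tendsto_nhds_unique (P.tendsto_apAux (a + b).2) ?_
    have h1 := (P.tendsto_apAux a.2).add (P.tendsto_apAux b.2)
    have he : (fun k => P.Φ (cm f (BS f k)) a.1 + P.Φ (cm f (BS f k)) b.1)
        = fun k => P.Φ (cm f (BS f k)) ((a + b : P.Dom f) : H) := by
      funext k; simp
    rwa [he] at h1
  map_smul' := by
    intro c a
    refine tendsto_nhds_unique (P.tendsto_apAux (c • a).2) ?_
    have h1 := (P.tendsto_apAux a.2).const_smul c
    have he : (fun k => c • P.Φ (cm f (BS f k)) a.1)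
        = fun k => P.Φ (cm f (BS f k)) ((c • a : P.Dom f) : H) := by
      funext k; simp
    rwa [he] at h1

/-- the extension as a partially defined linear operator -/
def apPM (f : X → 𝕜) : H →ₗ.[𝕜] H := ⟨P.Dom f, P.apL f⟩

lemma apPM_apply {f : X → 𝕜} (x : P.Dom f) : P.apPM f x = P.apAux f x.1 := rfl

omit [RCLike 𝕜] in
lemma cm_eventually_eq' : True := trivial
lemma cm_eventually_eq (f : X → 𝕜) {C : ℝ} (hb : ∀ y, ‖f y‖ ≤ C) :
    ∀ᶠ k in atTop, cm f (BS f k) = f := by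
  obtain ⟨n₀, hn₀⟩ := exists_nat_ge C
  refine eventually_atTop.mpr ⟨n₀, fun m hm => ?_⟩
  funext y
  exact cm_apply_mem
    (show y ∈ BS f m from le_trans (hb y) (le_trans hn₀ ((Nat.cast_le (α := ℝ)).mpr hm)))

lemma tendsto_seq_of_bdd (f : X → 𝕜) (hb : Bdd f) (x : H) :
    Tendsto (fun k => P.Φ (cm f (BS f k)) x) atTop (𝓝 (P.Φ f x)) := by
  obtain ⟨C, hC⟩ := hb
  exact tendsto_const_nhds.congr'
    (((cm_eventually_eq (𝕜 := 𝕜) f hC)).mono fun k hk => by simp only []; rw [hk])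

lemma mem_Dom_of_bdd (f : X → 𝕜) (hb : Bdd f) (x : H) : x ∈ P.Dom f :=
  (P.tendsto_seq_of_bdd f hb x).cauchySeq

lemma apAux_of_bdd (f : X → 𝕜) (hb : Bdd f) (x : H) : P.apAux f x = P.Φ f x :=
  tendsto_nhds_unique (P.tendsto_apAux (P.mem_Dom_of_bdd f hb x)) (P.tendsto_seq_of_bdd f hb x)

lemma Dom_of_bdd (f : X → 𝕜) (hb : Bdd f) : P.Dom f = ⊤ :=
  eq_top_iff.mpr fun x _ => P.mem_Dom_of_bdd f hb x

lemma apPM_of_bdd (f : X → 𝕜) (hb : Bdd f) :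
    P.apPM f = ((P.Φ f : H →ₗ[𝕜] H)).toPMap ⊤ := by
  refine LinearPMap.ext (P.Dom_of_bdd f hb) ?_
  intro x y hxy
  have h2 := P.apAux_of_bdd f hb x
  exact h2

lemma bdd_cm_of_subset {f : X → 𝕜} {A B : Set X} (h : B ⊆ A) (hb : Bdd (cm f A)) :
    Bdd (cm f B) := by
  obtain ⟨C, hC⟩ := hb
  exact ⟨C, fun y => (cm_norm_le_of_subset h y).trans (hC y)⟩

lemma Φ_diff (f : X → 𝕜) (hf : Measurable f) {S S' : Set X} (hS : S ⊆ S')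
    (mS : MeasurableSet S) (mS' : MeasurableSet S') (hb' : Bdd (cm f S')) (x : H) :
    P.Φ (cm f S') x - P.Φ (cm f S) x = P.Φ (cm f (S' \ S)) x := by
  have hsplit : cm f S' = cm f S + cm f (S' \ S) := by
    have := cm_add_diff f hS
    exact this
  rw [hsplit, P.hadd _ _ (meas_cm hf mS) (bdd_cm_of_subset hS (hsplit ▸ hb'))
    (meas_cm hf (mS'.diff mS)) (bdd_cm_of_subset (Set.diff_subset) (hsplit ▸ hb'))]
  simp

/-- generalized cutoff convergence, part (i) -/
lemma tendsto_cutoff (f : X → 𝕜) (hf : Measurable f) (A : ℕ → Set X)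
    (hAm : ∀ n, MeasurableSet (A n)) (hAe : ∀ y, ∀ᶠ n in atTop, y ∈ A n)
    (hfb : ∀ n, Bdd (cm f (A n))) {x : H} (hx : x ∈ P.Dom f) :
    Tendsto (fun n => P.Φ (cm f (A n)) x) atTop (𝓝 (P.apAux f x)) := by
  have hs := P.tendsto_apAux hx
  set L := P.apAux f x with hL
  rw [Metric.tendsto_atTop]
  intro ε hε
  obtain ⟨m₀, hm₀⟩ := (Metric.tendsto_atTop.mp hs) (ε/8) (by linarith)
  have hBm : ∀ M, MeasurableSet (BS f M) := measurableSet_BS hf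
  -- claim 1
  have claim1 : ∀ n, ‖P.Φ (cm f (A n)) x - P.Φ (cm f (A n ∩ BS f m₀)) x‖ ≤ ε/4 := by
    intro n
    have htail : Tendsto (fun M => P.Φ (cm f (A n \ BS f M)) x) atTop (𝓝 0) := by
      obtain ⟨Cn, hCn⟩ := hfb n
      have h0 : (0 : H) = P.Φ 0 x := by rw [P.map_zero]; simp
      rw [h0]
      refine P.sbp _ _ (fun M => meas_cm hf ((hAm n).diff (hBm M))) measurable_const
        (C := Cn) (fun M y => (cm_norm_le_of_subset Set.diff_subset y).trans (hCn y)) ?_ x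
      · intro y
        refine tendsto_const_nhds.congr' ?_
        filter_upwards [BS_eventually f y] with M hM
        exact (cm_apply_not_mem (fun hc => hc.2 hM)).symm
    have hstep : ∀ M, m₀ ≤ M →
        ‖P.Φ (cm f (A n)) x - P.Φ (cm f (A n ∩ BS f m₀)) x‖
          ≤ ε/4 + ‖P.Φ (cm f (A n \ BS f M)) x‖ := by
      intro M hM
      have hsub1 : A n ∩ BS f m₀ ⊆ A n ∩ BS f M :=
        Set.inter_subset_inter_right _ (BS_mono f hM)
      have hbAn := hfb n
      have bIM : Bdd (cm f (A n ∩ BS f M)) := bdd_cm_of_subset Set.inter_subset_left hbAn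
      -- decompose
      have hd1 : P.Φ (cm f (A n)) x - P.Φ (cm f (A n ∩ BS f M)) x
          = P.Φ (cm f (A n \ BS f M)) x := by
        have h := P.Φ_diff f hf (Set.inter_subset_left (s := A n) (t := BS f M))
          ((hAm n).inter (hBm M)) (hAm n) hbAn x
        rw [Set.diff_self_inter] at h
        exact h
      have hd2 : P.Φ (cm f (A n ∩ BS f M)) x - P.Φ (cm f (A n ∩ BS f m₀)) x
          = P.Φ (cm f ((A n ∩ BS f M) \ (A n ∩ BS f m₀))) x :=
        P.Φ_diff f hf hsub1 ((hAm n).inter (hBm m₀)) ((hAm n).inter (hBm M)) bIM x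
      have hd3 : ‖P.Φ (cm f ((A n ∩ BS f M) \ (A n ∩ BS f m₀))) x‖
          ≤ ‖P.Φ (cm f (BS f M \ BS f m₀)) x‖ := by
        refine P.norm_apply_mono _ _
          (meas_cm hf (((hAm n).inter (hBm M)).diff ((hAm n).inter (hBm m₀))))
          (meas_cm hf ((hBm M).diff (hBm m₀)))
          ⟨M, norm_cm_le f (by positivity) (fun y hy => hy.1)⟩ ?_ x
        intro y
        refine cm_norm_le_of_subset ?_ y
        rintro z ⟨⟨hz1, hz2⟩, hz3⟩
        exact ⟨hz2, fun hc => hz3 ⟨hz1, hc⟩⟩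
      have hd4 : P.Φ (cm f (BS f M \ BS f m₀)) x
          = P.Φ (cm f (BS f M)) x - P.Φ (cm f (BS f m₀)) x :=
        (P.Φ_diff f hf (BS_mono f hM) (hBm m₀) (hBm M) ⟨M, norm_cm_BS_le f M⟩ x).symm
      have hd5 : ‖P.Φ (cm f (BS f M)) x - P.Φ (cm f (BS f m₀)) x‖ ≤ ε/4 := by
        have e1 := hm₀ M hM
        have e2 := hm₀ m₀ (le_refl m₀)
        rw [dist_eq_norm] at e1 e2
        calc ‖P.Φ (cm f (BS f M)) x - P.Φ (cm f (BS f m₀)) x‖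
            ≤ ‖P.Φ (cm f (BS f M)) x - L‖ + ‖L - P.Φ (cm f (BS f m₀)) x‖ := norm_sub_le_norm_sub_add_norm_sub _ _ _
          _ ≤ ε/8 + ε/8 := by
              rw [norm_sub_rev L]
              exact add_le_add e1.le e2.le
          _ = ε/4 := by ring
      calc ‖P.Φ (cm f (A n)) x - P.Φ (cm f (A n ∩ BS f m₀)) x‖
          ≤ ‖P.Φ (cm f (A n ∩ BS f M)) x - P.Φ (cm f (A n ∩ BS f m₀)) x‖
            + ‖P.Φ (cm f (A n)) x - P.Φ (cm f (A n ∩ BS f M)) x‖ := by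
            have : P.Φ (cm f (A n)) x - P.Φ (cm f (A n ∩ BS f m₀)) x
                = (P.Φ (cm f (A n ∩ BS f M)) x - P.Φ (cm f (A n ∩ BS f m₀)) x)
                  + (P.Φ (cm f (A n)) x - P.Φ (cm f (A n ∩ BS f M)) x) := by abel
            rw [this]
            exact norm_add_le _ _
        _ ≤ ε/4 + ‖P.Φ (cm f (A n \ BS f M)) x‖ := by
            rw [hd1, hd2]
            exact add_le_add ((hd3.trans (hd4 ▸ hd5))) (le_refl _)
    have := ge_of_tendsto (tendsto_const_nhds.add htail.norm)
      (eventually_atTop.mpr ⟨m₀, hstep⟩)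
    simpa using this
  -- claim 2
  have claim2 : Tendsto (fun n => P.Φ (cm f (A n ∩ BS f m₀)) x) atTop
      (𝓝 (P.Φ (cm f (BS f m₀)) x)) := by
    refine P.sbp _ _ (fun n => meas_cm hf ((hAm n).inter (hBm m₀))) (meas_cm hf (hBm m₀))
      (C := m₀) (fun n y => norm_cm_le f (by positivity) (fun z hz => hz.2) y) ?_ x
    intro y
    refine tendsto_const_nhds.congr' ?_
    filter_upwards [hAe y] with n hn
    by_cases hy : y ∈ BS f m₀
    · rw [cm_apply_mem hy, cm_apply_mem (show y ∈ A n ∩ BS f m₀ from ⟨hn, hy⟩)]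
    · rw [cm_apply_not_mem hy, cm_apply_not_mem (show y ∉ A n ∩ BS f m₀ from fun hc => hy hc.2)]
  obtain ⟨N, hN⟩ := (Metric.tendsto_atTop.mp claim2) (ε/8) (by linarith)
  refine ⟨N, fun n hn => ?_⟩
  have e2 := hN n hn
  have e3 := hm₀ m₀ (le_refl m₀)
  rw [dist_eq_norm] at e2 e3 ⊢
  calc ‖P.Φ (cm f (A n)) x - L‖
      ≤ ‖P.Φ (cm f (A n)) x - P.Φ (cm f (A n ∩ BS f m₀)) x‖
        + ‖P.Φ (cm f (A n ∩ BS f m₀)) x - P.Φ (cm f (BS f m₀)) x‖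
        + ‖P.Φ (cm f (BS f m₀)) x - L‖ := by
        have : P.Φ (cm f (A n)) x - L
            = (P.Φ (cm f (A n)) x - P.Φ (cm f (A n ∩ BS f m₀)) x)
              + (P.Φ (cm f (A n ∩ BS f m₀)) x - P.Φ (cm f (BS f m₀)) x)
              + (P.Φ (cm f (BS f m₀)) x - L) := by abel
        rw [this]
        exact (norm_add_le _ _).trans (add_le_add (norm_add_le _ _) le_rfl)
    _ < ε/4 + ε/8 + ε/8 := by
        exact add_lt_add_of_lt_of_le (add_lt_add_of_le_of_lt (claim1 n) e2) e3.le
    _ < ε := by linarith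

/-- generalized cutoff convergence, part (ii) -/
lemma mem_Dom_cutoff (f : X → 𝕜) (hf : Measurable f) (A : ℕ → Set X)
    (hAm : ∀ n, MeasurableSet (A n)) (hAe : ∀ y, ∀ᶠ n in atTop, y ∈ A n)
    (hfb : ∀ n, Bdd (cm f (A n))) {x : H}
    (hc : CauchySeq fun n => P.Φ (cm f (A n)) x) : x ∈ P.Dom f := by
  obtain ⟨M, hM⟩ := exists_bound_of_cauchySeq _ hc
  refine P.cauchy_of_norm_bdd f hf x (M := M) fun k => ?_
  have h2 : Tendsto (fun n => P.Φ (cm f (BS f k ∩ A n)) x) atTop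
      (𝓝 (P.Φ (cm f (BS f k)) x)) := by
    refine P.sbp _ _ (fun n => meas_cm hf ((measurableSet_BS hf k).inter (hAm n)))
      (meas_cm hf (measurableSet_BS hf k))
      (C := k) (fun n y => norm_cm_le f (by positivity) (fun z hz => hz.1) y) ?_ x
    intro y
    refine tendsto_const_nhds.congr' ?_
    filter_upwards [hAe y] with n hn
    by_cases hy : y ∈ BS f k
    · rw [cm_apply_mem hy, cm_apply_mem (show y ∈ BS f k ∩ A n from ⟨hy, hn⟩)]
    · rw [cm_apply_not_mem hy, cm_apply_not_mem (show y ∉ BS f k ∩ A n from fun hc => hy hc.1)]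
  refine le_of_tendsto h2.norm (Eventually.of_forall fun n => ?_)
  refine (P.norm_apply_mono _ _ (meas_cm hf ((measurableSet_BS hf k).inter (hAm n)))
    (meas_cm hf (hAm n)) (hfb n) ?_ x).trans (hM n)
  exact fun y => cm_norm_le_of_subset Set.inter_subset_right y

/-- the standard triple cutoff sets for the product -/
def TS (f g : X → 𝕜) (n : ℕ) : Set X := BS f n ∩ BS g n ∩ BS (f * g) n

lemma TS_meas {f g : X → 𝕜} (hf : Measurable f) (hg : Measurable g) (n : ℕ) :
    MeasurableSet (TS f g n) :=
  ((measurableSet_BS hf n).inter (measurableSet_BS hg n)).inter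
    (measurableSet_BS (hf.mul hg) n)

lemma TS_eventually (f g : X → 𝕜) (y : X) : ∀ᶠ n in atTop, y ∈ TS f g n := by
  filter_upwards [BS_eventually f y, BS_eventually g y, BS_eventually (f*g) y] with n h1 h2 h3
  exact ⟨⟨h1, h2⟩, h3⟩

lemma TS_bdd_f (f g : X → 𝕜) (n : ℕ) : Bdd (cm f (TS f g n)) :=
  ⟨n, fun y => norm_cm_le f (by positivity) (fun z hz => hz.1.1) y⟩
lemma TS_bdd_g (f g : X → 𝕜) (n : ℕ) : Bdd (cm g (TS f g n)) :=
  ⟨n, fun y => norm_cm_le g (by positivity) (fun z hz => hz.1.2) y⟩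
lemma TS_bdd_fg (f g : X → 𝕜) (n : ℕ) : Bdd (cm (f * g) (TS f g n)) :=
  ⟨n, fun y => norm_cm_le (f*g) (by positivity) (fun z hz => hz.2) y⟩

/-- additivity on common domain -/
lemma add_core (f g : X → 𝕜) (hf : Measurable f) (hg : Measurable g) {x : H}
    (hxf : x ∈ P.Dom f) (hxg : x ∈ P.Dom g) :
    x ∈ P.Dom (f + g) ∧ P.apAux (f + g) x = P.apAux f x + P.apAux g x := by
  set A : ℕ → Set X := fun n => BS f n ∩ BS g n with hA
  have hAm : ∀ n, MeasurableSet (A n) := fun n =>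
    (measurableSet_BS hf n).inter (measurableSet_BS hg n)
  have hAe : ∀ y, ∀ᶠ n in atTop, y ∈ A n := fun y => by
    filter_upwards [BS_eventually f y, BS_eventually g y] with n h1 h2; exact ⟨h1, h2⟩
  have hbf : ∀ n, Bdd (cm f (A n)) := fun n =>
    ⟨n, fun y => norm_cm_le f (by positivity) (fun z hz => hz.1) y⟩
  have hbg : ∀ n, Bdd (cm g (A n)) := fun n =>
    ⟨n, fun y => norm_cm_le g (by positivity) (fun z hz => hz.2) y⟩
  have hbfg : ∀ n, Bdd (cm (f + g) (A n)) := fun n =>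
    ⟨(n : ℝ) + n, fun y => norm_cm_le (f + g) (by positivity)
      (fun z hz => by
        calc ‖(f + g) z‖ ≤ ‖f z‖ + ‖g z‖ := norm_add_le _ _
        _ ≤ (n : ℝ) + n := add_le_add hz.1 hz.2) y⟩
  have t1 := P.tendsto_cutoff f hf A hAm hAe hbf hxf
  have t2 := P.tendsto_cutoff g hg A hAm hAe hbg hxg
  have tsum : Tendsto (fun n => P.Φ (cm (f + g) (A n)) x) atTop
      (𝓝 (P.apAux f x + P.apAux g x)) := by
    have he : (fun n => P.Φ (cm (f + g) (A n)) x)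
        = fun n => P.Φ (cm f (A n)) x + P.Φ (cm g (A n)) x := by
      funext n
      rw [cm_add_fun, P.hadd _ _ (meas_cm hf (hAm n)) (hbf n) (meas_cm hg (hAm n)) (hbg n)]
      simp
    rw [he]
    exact t1.add t2
  have hmem : x ∈ P.Dom (f + g) :=
    P.mem_Dom_cutoff (f + g) (hf.add hg) A hAm hAe hbfg tsum.cauchySeq
  exact ⟨hmem, tendsto_nhds_unique
    (P.tendsto_cutoff (f + g) (hf.add hg) A hAm hAe hbfg hmem) tsum⟩

/-- scalar multiples -/
lemma smul_core (c : 𝕜) (f : X → 𝕜) (hf : Measurable f) {x : H} (hxf : x ∈ P.Dom f) :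
    x ∈ P.Dom (fun y => c * f y) ∧ P.apAux (fun y => c * f y) x = c • P.apAux f x := by
  by_cases hc : c = 0
  · subst hc
    have he : (fun y : X => (0:𝕜) * f y) = (0 : X → 𝕜) := by funext y; simp
    rw [he]
    constructor
    · exact P.mem_Dom_of_bdd 0 ⟨0, fun y => by simp⟩ x
    · rw [P.apAux_of_bdd 0 ⟨0, fun y => by simp⟩ x, P.map_zero]
      simp
  · set cf := fun y => c * f y with hcf
    have hmcf : Measurable cf := measurable_const.mul hf
    have hkey : ∀ n, cm cf (BS cf n) = fun y => c * cm f (BS cf n) y := by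
      intro n; funext y
      by_cases hy : y ∈ BS cf n
      · rw [cm_apply_mem hy, cm_apply_mem hy]
      · rw [cm_apply_not_mem hy, cm_apply_not_mem hy, mul_zero]
    have hbf : ∀ n, Bdd (cm f (BS cf n)) := fun n =>
      ⟨(n : ℝ) / ‖c‖, fun y => norm_cm_le f (div_nonneg (by positivity) (norm_nonneg c)) (fun z hz => by
        have h1 : ‖c‖ * ‖f z‖ ≤ n := by rw [← norm_mul]; exact hz
        rw [le_div_iff₀ (norm_pos_iff.mpr hc)]
        linarith [h1]) y⟩
    have t1 := P.tendsto_cutoff f hf (fun n => BS cf n)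
      (fun n => measurableSet_BS hmcf n) (BS_eventually cf) hbf hxf
    have t2 : Tendsto (fun n => P.Φ (cm cf (BS cf n)) x) atTop (𝓝 (c • P.apAux f x)) := by
      have he : (fun n => P.Φ (cm cf (BS cf n)) x)
          = fun n => c • P.Φ (cm f (BS cf n)) x := by
        funext n
        rw [hkey n, P.hsmul c _ (meas_cm hf (measurableSet_BS hmcf n)) (hbf n)]
        simp
      rw [he]
      exact t1.const_smul c
    have hmem : x ∈ P.Dom cf := t2.cauchySeq
    exact ⟨hmem, tendsto_nhds_unique (P.tendsto_apAux hmem) t2⟩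

/-- the star identity for products -/
lemma star_identity (f g : X → 𝕜) (hf : Measurable f) (hg : Measurable g) {x : H}
    (hx : x ∈ P.Dom g) (n : ℕ) :
    P.Φ (cm f (TS f g n)) (P.apAux g x) = P.Φ (cm (f * g) (TS f g n ∩ BS g n)) x := by
  have hTm := TS_meas hf hg
  have t1 : Tendsto (fun m => P.Φ (cm f (TS f g n)) (P.Φ (cm g (BS g m)) x)) atTop
      (𝓝 (P.Φ (cm f (TS f g n)) (P.apAux g x))) :=
    ((P.Φ (cm f (TS f g n))).continuous.tendsto _).comp (P.tendsto_apAux hx)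
  have t2 : Tendsto (fun m => P.Φ (cm f (TS f g n)) (P.Φ (cm g (BS g m)) x)) atTop
      (𝓝 (P.Φ (cm (f * g) (TS f g n ∩ BS g n)) x)) := by
    have he : ∀ m, P.Φ (cm f (TS f g n)) (P.Φ (cm g (BS g m)) x)
        = P.Φ (cm (f * g) (TS f g n ∩ BS g m)) x := by
      intro m
      rw [← cm_mul_cm, P.hmul _ _ (meas_cm hf (hTm n)) (TS_bdd_f f g n)
        (meas_cm hg (measurableSet_BS hg m)) ⟨m, norm_cm_BS_le g m⟩]
      rfl
    have hsb : Tendsto (fun m => P.Φ (cm (f * g) (TS f g n ∩ BS g m)) x) atTop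
        (𝓝 (P.Φ (cm (f * g) (TS f g n ∩ BS g n)) x)) := by
      refine P.sbp _ _ (fun m => meas_cm (hf.mul hg) ((hTm n).inter (measurableSet_BS hg m)))
        (meas_cm (hf.mul hg) ((hTm n).inter (measurableSet_BS hg n)))
        (C := n) (fun m y => norm_cm_le (f*g) (by positivity) (fun z hz => hz.1.2) y) ?_ x
      intro y
      refine tendsto_const_nhds.congr' ?_
      filter_upwards [BS_eventually g y] with m hm
      by_cases hy : y ∈ TS f g n
      · by_cases hy2 : y ∈ BS g n
        · rw [cm_apply_mem (show y ∈ TS f g n ∩ BS g n from ⟨hy, hy2⟩),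
            cm_apply_mem (show y ∈ TS f g n ∩ BS g m from ⟨hy, hm⟩)]
        · rw [cm_apply_not_mem (show y ∉ TS f g n ∩ BS g n from fun hc => hy2 hc.2),
            cm_apply_mem (show y ∈ TS f g n ∩ BS g m from ⟨hy, hm⟩)]
          exfalso
          exact hy2 hy.1.2
      · rw [cm_apply_not_mem (show y ∉ TS f g n ∩ BS g n from fun hc => hy hc.1),
          cm_apply_not_mem (show y ∉ TS f g n ∩ BS g m from fun hc => hy hc.1)]
    exact hsb.congr fun m => (he m).symm
  exact tendsto_nhds_unique t1 t2

lemma TS_inter_BS (f g : X → 𝕜) (n : ℕ) : TS f g n ∩ BS g n = TS f g n :=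
  Set.inter_eq_left.mpr fun y hy => hy.1.2

/-- composition: full characterization -/
lemma mul_core (f g : X → 𝕜) (hf : Measurable f) (hg : Measurable g) {x : H}
    (hx : x ∈ P.Dom g) :
    ((P.apAux g x ∈ P.Dom f) ↔ x ∈ P.Dom (f * g)) ∧
      (P.apAux g x ∈ P.Dom f → P.apAux f (P.apAux g x) = P.apAux (f * g) x) := by
  have hTm := TS_meas hf hg
  have hstar : ∀ n, P.Φ (cm f (TS f g n)) (P.apAux g x)
      = P.Φ (cm (f * g) (TS f g n)) x := by
    intro n
    rw [P.star_identity f g hf hg hx n, TS_inter_BS]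
  have hAe := TS_eventually f g
  constructor
  · constructor
    · intro hy
      have t1 := P.tendsto_cutoff f hf (TS f g) hTm hAe (TS_bdd_f f g) hy
      have t1' : Tendsto (fun n => P.Φ (cm (f * g) (TS f g n)) x) atTop
          (𝓝 (P.apAux f (P.apAux g x))) := t1.congr fun n => hstar n
      exact P.mem_Dom_cutoff (f * g) (hf.mul hg) (TS f g) hTm hAe (TS_bdd_fg f g)
        t1'.cauchySeq
    · intro hx2
      have t2 := P.tendsto_cutoff (f * g) (hf.mul hg) (TS f g) hTm hAe (TS_bdd_fg f g) hx2
      have t2' : Tendsto (fun n => P.Φ (cm f (TS f g n)) (P.apAux g x)) atTop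
          (𝓝 (P.apAux (f * g) x)) := t2.congr fun n => (hstar n).symm
      exact P.mem_Dom_cutoff f hf (TS f g) hTm hAe (TS_bdd_f f g) t2'.cauchySeq
  · intro hy
    have t1 := P.tendsto_cutoff f hf (TS f g) hTm hAe (TS_bdd_f f g) hy
    have t1' : Tendsto (fun n => P.Φ (cm (f * g) (TS f g n)) x) atTop
        (𝓝 (P.apAux f (P.apAux g x))) := t1.congr fun n => hstar n
    have hx2 : x ∈ P.Dom (f * g) :=
      P.mem_Dom_cutoff (f * g) (hf.mul hg) (TS f g) hTm hAe (TS_bdd_fg f g) t1'.cauchySeq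
    exact tendsto_nhds_unique t1'
      (P.tendsto_cutoff (f * g) (hf.mul hg) (TS f g) hTm hAe (TS_bdd_fg f g) hx2)

/-- projection identity -/
lemma proj_identity (f : X → 𝕜) (hf : Measurable f) {w : H} (hw : w ∈ P.Dom f) (m : ℕ) :
    P.Φ (ind (BS f m)) (P.apAux f w) = P.Φ (cm f (BS f m)) w := by
  have t1 : Tendsto (fun M => P.Φ (ind (BS f m)) (P.Φ (cm f (BS f M)) w)) atTop
      (𝓝 (P.Φ (ind (BS f m)) (P.apAux f w))) :=
    ((P.Φ (ind (BS f m))).continuous.tendsto _).comp (P.tendsto_apAux hw)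
  have t2 : Tendsto (fun M => P.Φ (ind (BS f m)) (P.Φ (cm f (BS f M)) w)) atTop
      (𝓝 (P.Φ (cm f (BS f m)) w)) := by
    refine tendsto_const_nhds.congr' ?_
    filter_upwards [eventually_ge_atTop m] with M hM
    have he : (fun y => ind (BS f m) y * cm f (BS f M) y) = cm f (BS f m) :=
      ind_mul_cm f _ _ (BS_mono f hM)
    have := P.hmul (ind (BS f m)) (cm f (BS f M)) (meas_ind (measurableSet_BS hf m))
      ⟨1, norm_ind_le _⟩ (meas_cm hf (measurableSet_BS hf M)) ⟨M, norm_cm_BS_le f M⟩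
    have h2 : P.Φ (fun y => ind (BS f m) y * cm f (BS f M) y)
        = P.Φ (ind (BS f m)) * P.Φ (cm f (BS f M)) := this
    rw [← he, h2]
    rfl
  exact tendsto_nhds_unique t1 t2

/-- approximate identities tend to the identity strongly -/
lemma tendsto_ind_one (f : X → 𝕜) (hf : Measurable f) (z : H) :
    Tendsto (fun m => P.Φ (ind (BS f m)) z) atTop (𝓝 z) := by
  have h1 : Tendsto (fun m => P.Φ (ind (BS f m)) z) atTop (𝓝 (P.Φ (fun _ => 1) z)) := by
    refine P.sbp _ _ (fun m => meas_ind (measurableSet_BS hf m)) measurable_const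
      (C := 1) (fun m y => norm_ind_le _ y) ?_ z
    intro y
    refine tendsto_const_nhds.congr' ?_
    filter_upwards [BS_eventually f y] with m hm
    exact (ind_mem hm).symm
  rwa [P.hone] at h1

lemma norm_ind_apply_le (S : Set X) (hS : MeasurableSet S) (z : H) :
    ‖P.Φ (ind S) z‖ ≤ ‖z‖ := by
  have := P.norm_le (ind S) (meas_ind hS) (C := 1) zero_le_one (norm_ind_le S) z
  simpa using this

/-- closedness of the extension -/
lemma closed_core (f : X → 𝕜) (hf : Measurable f) {u : ℕ → H} {v : ℕ → H} {x z : H}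
    (hu : ∀ k, u k ∈ P.Dom f) (hval : ∀ k, P.apAux f (u k) = v k)
    (hux : Tendsto u atTop (𝓝 x)) (hvz : Tendsto v atTop (𝓝 z)) :
    x ∈ P.Dom f ∧ P.apAux f x = z := by
  have key : ∀ m, P.Φ (cm f (BS f m)) x = P.Φ (ind (BS f m)) z := by
    intro m
    have h1 : ∀ k, P.Φ (ind (BS f m)) (v k) = P.Φ (cm f (BS f m)) (u k) := by
      intro k
      rw [← hval k]
      exact P.proj_identity f hf (hu k) m
    have t1 : Tendsto (fun k => P.Φ (ind (BS f m)) (v k)) atTop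
        (𝓝 (P.Φ (ind (BS f m)) z)) := ((P.Φ _).continuous.tendsto _).comp hvz
    have t2 : Tendsto (fun k => P.Φ (cm f (BS f m)) (u k)) atTop
        (𝓝 (P.Φ (cm f (BS f m)) x)) := ((P.Φ _).continuous.tendsto _).comp hux
    exact (tendsto_nhds_unique (t1.congr fun k => h1 k) t2).symm
  have hbdd : ∀ m, ‖P.Φ (cm f (BS f m)) x‖ ≤ ‖z‖ := fun m => by
    rw [key m]
    exact P.norm_ind_apply_le _ (measurableSet_BS hf m) z
  have hmem : x ∈ P.Dom f := P.cauchy_of_norm_bdd f hf x hbdd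
  refine ⟨hmem, ?_⟩
  have t3 := P.tendsto_apAux hmem
  have t4 : Tendsto (fun m => P.Φ (cm f (BS f m)) x) atTop (𝓝 z) :=
    (P.tendsto_ind_one f hf z).congr fun m => (key m).symm
  exact tendsto_nhds_unique t3 t4

end BPHom

lemma LinearPMap.compP_mem_domain_iff {R E : Type*} [Ring R] [AddCommGroup E] [Module R E]
    {S T : E →ₗ.[R] E} {x : E} :
    x ∈ (S.compP T).domain ↔ ∃ hx : x ∈ T.domain, T ⟨x, hx⟩ ∈ S.domain := by
  constructor
  · intro h
    obtain ⟨y, hy, hyx⟩ := Submodule.mem_map.mp h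
    have hxd : x ∈ T.domain := hyx ▸ y.2
    refine ⟨hxd, ?_⟩
    have e : (⟨x, hxd⟩ : T.domain) = y := Subtype.ext hyx.symm
    rw [e]
    exact hy
  · rintro ⟨hx, h2⟩
    exact ⟨⟨x, hx⟩, h2, rfl⟩

lemma LinearPMap.compP_apply {R E : Type*} [Ring R] [AddCommGroup E] [Module R E]
    {S T : E →ₗ.[R] E} (x : (S.compP T).domain) (hx : (x : E) ∈ T.domain)
    (h2 : T ⟨(x : E), hx⟩ ∈ S.domain) :
    (S.compP T) x = S ⟨T ⟨(x : E), hx⟩, h2⟩ := rfl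

namespace BPHom

variable (P : BPHom X 𝕜 H)

lemma pm_val {Θ : H →ₗ.[𝕜] H} {A : H →L[𝕜] H} (h : Θ = (A : H →ₗ[𝕜] H).toPMap ⊤)
    {z : H} (hz : z ∈ Θ.domain) : Θ ⟨z, hz⟩ = A z := by
  subst h
  rfl

lemma apPM_isClosed (f : X → 𝕜) (hf : Measurable f) : (P.apPM f).IsClosed := by
  show IsClosed ((P.apPM f).graph : Set (H × H))
  apply IsSeqClosed.isClosed
  intro u p hu hup
  choose w hw1 hw2 using fun k => (LinearPMap.mem_graph_iff (P.apPM f)).mp (hu k)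
  have hux : Tendsto (fun k => ((w k : H))) atTop (𝓝 p.1) :=
    ((continuous_fst.tendsto p).comp hup).congr fun k => (hw1 k).symm
  have hvz : Tendsto (fun k => (u k).2) atTop (𝓝 p.2) := (continuous_snd.tendsto p).comp hup
  obtain ⟨hm, hv⟩ := P.closed_core f hf (u := fun k => ((w k : H))) (v := fun k => (u k).2)
    (fun k => (w k).2) (fun k => hw2 k) hux hvz
  exact (LinearPMap.mem_graph_iff _).mpr ⟨⟨p.1, hm⟩, rfl, hv⟩

lemma apPM_one : P.apPM (fun _ => (1:𝕜)) = (LinearMap.id : H →ₗ[𝕜] H).toPMap ⊤ := by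
  rw [P.apPM_of_bdd _ ⟨1, fun y => by simp⟩, P.hone]
  rfl

lemma apPM_add_le (f g : X → 𝕜) (hf : Measurable f) (hg : Measurable g) :
    P.apPM f + P.apPM g ≤ P.apPM (f + g) := by
  have hdom : (P.apPM f + P.apPM g).domain ≤ (P.apPM (f + g)).domain := by
    rw [LinearPMap.add_domain]
    rintro x ⟨hxf, hxg⟩
    exact (P.add_core f g hf hg hxf hxg).1
  refine ⟨hdom, ?_⟩
  intro x y hxy
  have hx1 : (x : H) ∈ P.Dom f := x.2.1
  have hx2 : (x : H) ∈ P.Dom g := x.2.2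
  have h1 : (P.apPM f + P.apPM g) x = P.apAux f (x : H) + P.apAux g (x : H) := rfl
  have h2 : (P.apPM (f + g)) y = P.apAux (f + g) (y : H) := rfl
  rw [h1, h2, ← hxy]
  exact ((P.add_core f g hf hg hx1 hx2).2).symm

lemma apPM_smul_le (c : 𝕜) (f : X → 𝕜) (hf : Measurable f) :
    c • P.apPM f ≤ P.apPM (fun y => c * f y) := by
  refine ⟨?_, ?_⟩
  · intro x hx
    exact (P.smul_core c f hf (hx : x ∈ P.Dom f)).1
  · intro x y hxy
    have h1 : (c • P.apPM f) x = c • P.apAux f (x : H) := rfl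
    have h2 : (P.apPM (fun y => c * f y)) y = P.apAux (fun y => c * f y) (y : H) := rfl
    rw [h1, h2, ← hxy]
    exact ((P.smul_core c f hf (x.2 : (x : H) ∈ P.Dom f)).2).symm

lemma apPM_comp_le (f g : X → 𝕜) (hf : Measurable f) (hg : Measurable g) :
    (P.apPM f).compP (P.apPM g) ≤ P.apPM (f * g) := by
  refine ⟨?_, ?_⟩
  · intro x hx
    obtain ⟨hx1, hx2⟩ := LinearPMap.compP_mem_domain_iff.mp hx
    exact ((P.mul_core f g hf hg hx1).1).mp hx2
  · intro x y hxy
    obtain ⟨hx1, hx2⟩ := LinearPMap.compP_mem_domain_iff.mp x.2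
    rw [LinearPMap.compP_apply x hx1 hx2]
    have h1 : (P.apPM f) ⟨(P.apPM g) ⟨(x : H), hx1⟩, hx2⟩
        = P.apAux f (P.apAux g (x : H)) := rfl
    have h2 : (P.apPM (f * g)) y = P.apAux (f * g) (y : H) := rfl
    rw [h1, h2, ← hxy]
    exact (P.mul_core f g hf hg hx1).2 hx2

lemma apPM_comp_dom (f g : X → 𝕜) (hf : Measurable f) (hg : Measurable g) :
    ((P.apPM f).compP (P.apPM g)).domain = (P.apPM g).domain ⊓ (P.apPM (f * g)).domain := by
  ext x
  rw [Submodule.mem_inf, LinearPMap.compP_mem_domain_iff]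
  constructor
  · rintro ⟨hx1, hx2⟩
    exact ⟨hx1, ((P.mul_core f g hf hg hx1).1).mp hx2⟩
  · rintro ⟨hx1, hx2⟩
    exact ⟨hx1, ((P.mul_core f g hf hg hx1).1).mpr hx2⟩

lemma apPM_cont (f : X → 𝕜) (hb : Bdd f) :
    Continuous fun x : (P.apPM f).domain => P.apPM f x := by
  have he : (fun x : (P.apPM f).domain => P.apPM f x)
      = fun x : (P.apPM f).domain => P.Φ f (x : H) := by
    funext x
    exact P.apAux_of_bdd f hb x.1
  rw [he]
  exact (P.Φ f).continuous.comp continuous_subtype_val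

lemma apPM_star (f : X → 𝕜) (hf : Measurable f) (hb : Bdd f) :
    (P.apPM f).adjoint = P.apPM (fun y => starRingEnd 𝕜 (f y)) := by
  have hbc : Bdd (fun y => starRingEnd 𝕜 (f y)) := by
    obtain ⟨C, hC⟩ := hb
    exact ⟨C, fun y => by simpa using hC y⟩
  rw [P.apPM_of_bdd f hb, P.apPM_of_bdd _ hbc, P.hstar f hf hb]
  exact ContinuousLinearMap.toPMap_adjoint_eq_adjoint_toPMap_of_dense (P.Φ f)
    (by rw [Submodule.top_coe]; exact dense_univ)

lemma apPM_bp (f : ℕ → X → 𝕜) (g : X → 𝕜) (hf : ∀ n, Measurable (f n)) (hg : Measurable g)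
    (hC : ∃ C, ∀ n x, ‖f n x‖ ≤ C)
    (hlim : ∀ x, Tendsto (fun n => f n x) atTop (𝓝 (g x)))
    (x y : H) (hn : ∀ n, x ∈ (P.apPM (f n)).domain) (hgd : x ∈ (P.apPM g).domain) :
    Tendsto (fun n => (inner 𝕜 (P.apPM (f n) ⟨x, hn n⟩) y : 𝕜)) atTop
      (𝓝 (inner 𝕜 (P.apPM g ⟨x, hgd⟩) y)) := by
  obtain ⟨C, hC⟩ := hC
  have hbf : ∀ n, Bdd (f n) := fun n => ⟨C, hC n⟩
  have hbg : Bdd g := ⟨C, fun z => le_of_tendsto ((continuous_norm.tendsto _).comp (hlim z))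
    (Eventually.of_forall fun n => hC n z)⟩
  have e1 : ∀ n, (P.apPM (f n)) ⟨x, hn n⟩ = P.Φ (f n) x := fun n => by
    exact P.apAux_of_bdd (f n) (hbf n) x
  have e2 : (P.apPM g) ⟨x, hgd⟩ = P.Φ g x := by
    exact P.apAux_of_bdd g hbg x
  simp only [e1, e2]
  exact P.hbp f g hf hg ⟨C, hC⟩ hlim x y

/-- the measurable functional calculus induced by `P` -/
def toMFC : MeasFC X 𝕜 H where
  ap := P.apPM
  isClosed := fun f hf => P.apPM_isClosed f hf
  mfc1 := P.apPM_one
  mfc2_add := fun f g hf hg => P.apPM_add_le f g hf hg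
  mfc2_smul := fun c f hf => P.apPM_smul_le c f hf
  mfc3_le := fun f g hf hg => P.apPM_comp_le f g hf hg
  mfc3_dom := fun f g hf hg => P.apPM_comp_dom f g hf hg
  mfc4_dom := fun f _ hb => P.Dom_of_bdd f hb
  mfc4_cont := fun f _ hb => P.apPM_cont f hb
  mfc4_star := fun f hf hb => P.apPM_star f hf hb
  mfc5 := fun f g hf hg hC hlim x y hn hgd => P.apPM_bp f g hf hg hC hlim x y hn hgd

/-- uniqueness -/
lemma unique (Ψ : MeasFC X 𝕜 H)
    (hΨ : ∀ f : X → 𝕜, Measurable f → Bdd f → Ψ.ap f = ((P.Φ f : H →ₗ[𝕜] H)).toPMap ⊤)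
    (f : X → 𝕜) (hf : Measurable f) : Ψ.ap f = P.apPM f := by
  have hem : ∀ m : ℕ, Measurable (ind (BS f m) : X → 𝕜) :=
    fun m => meas_ind (measurableSet_BS hf m)
  have heb : ∀ m : ℕ, Bdd (ind (BS f m) : X → 𝕜) := fun m => ⟨1, norm_ind_le _⟩
  have hmf : ∀ m : ℕ, Measurable (cm f (BS f m)) := fun m => meas_cm hf (measurableSet_BS hf m)
  have hbf : ∀ m : ℕ, Bdd (cm f (BS f m)) := fun m => ⟨m, norm_cm_BS_le f m⟩
  -- part 1 : Ψ-domain is contained in our domain, with matching values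
  have part1 : ∀ x : (Ψ.ap f).domain, ∃ h : (x : H) ∈ P.Dom f, P.apAux f (x : H) = Ψ.ap f x := by
    intro x
    have key : ∀ m : ℕ, P.Φ (cm f (BS f m)) (x : H) = P.Φ (ind (BS f m)) (Ψ.ap f x) := by
      intro m
      have hΘ := hΨ (ind (BS f m)) (hem m) (heb m)
      have hdom_top : (Ψ.ap (ind (BS f m))).domain = ⊤ := by rw [hΘ]; rfl
      have hle := Ψ.mfc3_le (ind (BS f m)) f (hem m) hf
      have hmem : (x : H) ∈ ((Ψ.ap (ind (BS f m))).compP (Ψ.ap f)).domain :=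
        LinearPMap.compP_mem_domain_iff.mpr
          ⟨x.2, by rw [hdom_top]; exact Submodule.mem_top⟩
      have hval := hle.2 (x := ⟨(x : H), hmem⟩) (y := ⟨(x : H), hle.1 hmem⟩) rfl
      rw [LinearPMap.compP_apply ⟨(x : H), hmem⟩ x.2
        (by rw [hdom_top]; exact Submodule.mem_top)] at hval
      have l1 := pm_val hΘ (z := Ψ.ap f ⟨(x : H), x.2⟩)
        (by rw [hdom_top]; exact Submodule.mem_top)
      have hbfe : Bdd (ind (BS f m) * f : X → 𝕜) := by
        refine ⟨m, fun y => ?_⟩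
        by_cases hy : y ∈ BS f m
        · rw [Pi.mul_apply, ind_mem hy, one_mul]; exact hy
        · rw [Pi.mul_apply, ind_not_mem hy, zero_mul, norm_zero]; positivity
      have hΘ2 := hΨ (ind (BS f m) * f) ((hem m).mul hf) hbfe
      have l2 := pm_val hΘ2 (z := (x : H)) (hle.1 hmem)
      rw [l1, l2] at hval
      have l3 : (ind (BS f m) * f : X → 𝕜) = cm f (BS f m) := by
        funext y; exact mul_comm _ _
      rw [l3] at hval
      exact hval.symm
    have t1 : Tendsto (fun m => P.Φ (cm f (BS f m)) (x : H)) atTop (𝓝 (Ψ.ap f x)) :=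
      (P.tendsto_ind_one f hf (Ψ.ap f x)).congr fun m => (key m).symm
    have hmem : (x : H) ∈ P.Dom f := t1.cauchySeq
    exact ⟨hmem, tendsto_nhds_unique (P.tendsto_apAux hmem) t1⟩
  -- part 2 : our domain is contained in the Ψ-domain
  have part2 : ∀ x : H, x ∈ P.Dom f → x ∈ (Ψ.ap f).domain := by
    intro x hx
    have hw : ∀ m : ℕ, ∃ hm : P.Φ (ind (BS f m)) x ∈ (Ψ.ap f).domain,
        Ψ.ap f ⟨P.Φ (ind (BS f m)) x, hm⟩ = P.Φ (cm f (BS f m)) x := by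
      intro m
      have hΘ := hΨ (ind (BS f m)) (hem m) (heb m)
      have hdom_top : (Ψ.ap (ind (BS f m))).domain = ⊤ := by rw [hΘ]; rfl
      have hΘ2 := hΨ (f * ind (BS f m)) (hf.mul (hem m)) ⟨m, norm_cm_BS_le f m⟩
      have hdom_top2 : (Ψ.ap (f * ind (BS f m))).domain = ⊤ := by rw [hΘ2]; rfl
      have hd := Ψ.mfc3_dom f (ind (BS f m)) hf (hem m)
      have hdom3 : ((Ψ.ap f).compP (Ψ.ap (ind (BS f m)))).domain = ⊤ := by
        rw [hd, hdom_top, hdom_top2]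
        simp
      have hx3 : x ∈ ((Ψ.ap f).compP (Ψ.ap (ind (BS f m)))).domain := by
        rw [hdom3]; exact Submodule.mem_top
      obtain ⟨h1, h2⟩ := LinearPMap.compP_mem_domain_iff.mp hx3
      have e1 : Ψ.ap (ind (BS f m)) ⟨x, h1⟩ = P.Φ (ind (BS f m)) x := pm_val hΘ h1
      have hle := Ψ.mfc3_le f (ind (BS f m)) hf (hem m)
      have hval := hle.2 (x := ⟨x, hx3⟩) (y := ⟨x, hle.1 hx3⟩) rfl
      rw [LinearPMap.compP_apply ⟨x, hx3⟩ h1 h2] at hval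
      have l2 := pm_val hΘ2 (z := x) (hle.1 hx3)
      rw [l2] at hval
      have hm : P.Φ (ind (BS f m)) x ∈ (Ψ.ap f).domain := e1 ▸ h2
      refine ⟨hm, ?_⟩
      have e2 : (⟨P.Φ (ind (BS f m)) x, hm⟩ : (Ψ.ap f).domain)
          = ⟨Ψ.ap (ind (BS f m)) ⟨x, h1⟩, h2⟩ := Subtype.ext e1.symm
      rw [e2, hval]
      rfl
    choose hmem hval using hw
    have hseq : ∀ m, ((P.Φ (ind (BS f m)) x, P.Φ (cm f (BS f m)) x) : H × H) ∈ (Ψ.ap f).graph :=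
      fun m => (LinearPMap.mem_graph_iff _).mpr ⟨⟨_, hmem m⟩, rfl, hval m⟩
    have ht : Tendsto (fun m => ((P.Φ (ind (BS f m)) x, P.Φ (cm f (BS f m)) x) : H × H)) atTop
        (𝓝 (x, P.apAux f x)) :=
      (P.tendsto_ind_one f hf x).prodMk_nhds (P.tendsto_apAux hx)
    have hxg : ((x, P.apAux f x) : H × H) ∈ (Ψ.ap f).graph :=
      (Ψ.isClosed f hf).mem_of_tendsto ht (Eventually.of_forall hseq)
    obtain ⟨y, hy1, hy2⟩ := (LinearPMap.mem_graph_iff _).mp hxg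
    have e3 : (y : H) = x := hy1
    exact e3 ▸ y.2
  refine LinearPMap.ext ?_ ?_
  · refine le_antisymm (fun x hx => (part1 ⟨x, hx⟩).1) (fun x hx => part2 x hx)
  · intro x y hxy
    have h1 := (part1 ⟨x, y⟩).2
    show Ψ.ap f ⟨x, y⟩ = P.apAux f x
    exact h1.symm

end BPHom

end MFCExtensionAux

variable {𝕜 : Type*} [RCLike 𝕜] {X : Type*} [MeasurableSpace X]
  {H : Type*} [NormedAddCommGroup H] [InnerProductSpace 𝕜 H] [CompleteSpace H]

/-- Theorem 6.1: a weakly bp-continuous unital `*`-homomorphism on the bounded measurable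
functions extends uniquely to a measurable functional calculus. -/
theorem mfc_extension_from_bounded (Φ₀ : (X → 𝕜) → (H →L[𝕜] H))
    (hone : Φ₀ (fun _ => 1) = 1)
    (hadd : ∀ f g : X → 𝕜, Measurable f → (∃ C, ∀ x, ‖f x‖ ≤ C) →
      Measurable g → (∃ C, ∀ x, ‖g x‖ ≤ C) → Φ₀ (f + g) = Φ₀ f + Φ₀ g)
    (hsmul : ∀ (c : 𝕜) (f : X → 𝕜), Measurable f → (∃ C, ∀ x, ‖f x‖ ≤ C) →
      Φ₀ (fun x => c * f x) = c • Φ₀ f)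
    (hmul : ∀ f g : X → 𝕜, Measurable f → (∃ C, ∀ x, ‖f x‖ ≤ C) →
      Measurable g → (∃ C, ∀ x, ‖g x‖ ≤ C) → Φ₀ (f * g) = Φ₀ f * Φ₀ g)
    (hstar : ∀ f : X → 𝕜, Measurable f → (∃ C, ∀ x, ‖f x‖ ≤ C) →
      Φ₀ (fun x => starRingEnd 𝕜 (f x)) = ContinuousLinearMap.adjoint (Φ₀ f))
    (hbp : ∀ (f : ℕ → X → 𝕜) (g : X → 𝕜), (∀ n, Measurable (f n)) → Measurable g →
      (∃ C, ∀ n x, ‖f n x‖ ≤ C) →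
      (∀ x, Filter.Tendsto (fun n => f n x) Filter.atTop (𝓝 (g x))) →
      ∀ x y : H, Filter.Tendsto (fun n => (inner 𝕜 (Φ₀ (f n) x) y : 𝕜)) Filter.atTop
        (𝓝 (inner 𝕜 (Φ₀ g x) y))) :
    ∃ Φ : MeasFC X 𝕜 H,
      (∀ f : X → 𝕜, Measurable f → (∃ C, ∀ x, ‖f x‖ ≤ C) →
        Φ.ap f = (Φ₀ f : H →ₗ[𝕜] H).toPMap ⊤) ∧
      ∀ Ψ : MeasFC X 𝕜 H,
        (∀ f : X → 𝕜, Measurable f → (∃ C, ∀ x, ‖f x‖ ≤ C) →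
          Ψ.ap f = (Φ₀ f : H →ₗ[𝕜] H).toPMap ⊤) →
        ∀ f : X → 𝕜, Measurable f → Ψ.ap f = Φ.ap f := by
  classical
  let P : BPHom X 𝕜 H := ⟨Φ₀, hone, hadd, hsmul, hmul, hstar, hbp⟩
  refine ⟨P.toMFC, fun f hf hb => P.apPM_of_bdd f hb, fun Ψ hΨ f hf => ?_⟩
  exact P.unique Ψ (fun g hg hbg => hΨ g hg hbg) f hf

end
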